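/- For n ≥ 2, E[rₙ] = (3nτ − (n−2)ρ_S)/(2(n+1)); in particular rₙ is a biased but asymptotically unbiased estimator of r = (3τ − ρ_S)/2, i.e. E[rₙ] → r as n → ∞. -/

import Mathlib

open MeasureTheory ProbabilityTheory Finset Filter
open scoped ENNReal


namespace KRAux

lemma measurable_rsign : Measurable Real.sign := by
  unfold Real.sign
  exact Measurable.ite (measurableSet_lt measurable_id measurable_const) measurable_const
    (Measurable.ite (measurableSet_lt measurable_const measurable_id) measurable_const
      measurable_const)

variable {ν : Measure (ℝ × ℝ)} [IsProbabilityMeasure ν]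

lemma atom_fst (hac : ν ≪ (volume : Measure (ℝ × ℝ))) (c : ℝ) :
    ν {q : ℝ × ℝ | q.1 = c} = 0 := by
  apply hac
  have h : {q : ℝ × ℝ | q.1 = c} = {c} ×ˢ (Set.univ : Set ℝ) := by
    ext ⟨a, b⟩; simp [Set.mem_prod, eq_comm]
  rw [h, Measure.volume_eq_prod, Measure.prod_prod]
  simp

lemma atom_snd (hac : ν ≪ (volume : Measure (ℝ × ℝ))) (c : ℝ) :
    ν {q : ℝ × ℝ | q.2 = c} = 0 := by
  apply hac
  have h : {q : ℝ × ℝ | q.2 = c} = (Set.univ : Set ℝ) ×ˢ ({c} : Set ℝ) := by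
    ext ⟨a, b⟩; simp [Set.mem_prod, eq_comm]
  rw [h, Measure.volume_eq_prod, Measure.prod_prod]
  simp

section Proj

variable {f : ℝ × ℝ → ℝ} (hf : Measurable f) (hatom : ∀ c, ν {q | f q = c} = 0)

include hf hatom in
lemma tie2 : (ν.prod ν) {p : (ℝ × ℝ) × ℝ × ℝ | f p.1 = f p.2} = 0 := by
  have hs : MeasurableSet {p : (ℝ × ℝ) × ℝ × ℝ | f p.1 = f p.2} :=
    measurableSet_eq_fun (hf.comp measurable_fst) (hf.comp measurable_snd)
  rw [Measure.prod_apply hs]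
  have h : ∀ z : ℝ × ℝ, ν (Prod.mk z ⁻¹' {p : (ℝ × ℝ) × ℝ × ℝ | f p.1 = f p.2}) = 0 := by
    intro z
    have h2 : (Prod.mk z ⁻¹' {p : (ℝ × ℝ) × ℝ × ℝ | f p.1 = f p.2}) = {q | f q = f z} := by
      ext q; simp [eq_comm]
    rw [h2]; exact hatom _
  simp only [h, lintegral_zero]

include hf hatom in
lemma half_le : (ν.prod ν) {p : (ℝ × ℝ) × ℝ × ℝ | f p.2 ≤ f p.1} = 1/2 := by
  have hA : MeasurableSet {p : (ℝ × ℝ) × ℝ × ℝ | f p.2 ≤ f p.1} :=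
    measurableSet_le (hf.comp measurable_snd) (hf.comp measurable_fst)
  have hB : MeasurableSet {p : (ℝ × ℝ) × ℝ × ℝ | f p.1 ≤ f p.2} :=
    measurableSet_le (hf.comp measurable_fst) (hf.comp measurable_snd)
  have hswap : (ν.prod ν) {p : (ℝ × ℝ) × ℝ × ℝ | f p.1 ≤ f p.2}
      = (ν.prod ν) {p : (ℝ × ℝ) × ℝ × ℝ | f p.2 ≤ f p.1} := by
    conv_lhs => rw [← Measure.prod_swap (μ := ν) (ν := ν)]
    rw [Measure.map_apply measurable_swap hB]
    rfl
  have hsum := measure_union_add_inter (μ := ν.prod ν)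
    {p : (ℝ × ℝ) × ℝ × ℝ | f p.2 ≤ f p.1} hB
  have hU : {p : (ℝ × ℝ) × ℝ × ℝ | f p.2 ≤ f p.1} ∪ {p : (ℝ × ℝ) × ℝ × ℝ | f p.1 ≤ f p.2}
      = Set.univ := by
    ext p; simp [le_total]
  have hI : (ν.prod ν) ({p : (ℝ × ℝ) × ℝ × ℝ | f p.2 ≤ f p.1}
      ∩ {p : (ℝ × ℝ) × ℝ × ℝ | f p.1 ≤ f p.2}) = 0 := by
    have hsub : {p : (ℝ × ℝ) × ℝ × ℝ | f p.2 ≤ f p.1} ∩ {p : (ℝ × ℝ) × ℝ × ℝ | f p.1 ≤ f p.2}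
        ⊆ {p : (ℝ × ℝ) × ℝ × ℝ | f p.1 = f p.2} := by
      rintro p ⟨h1, h2⟩; exact le_antisymm h2 h1
    exact measure_mono_null hsub (tie2 hf hatom)
  rw [hU, hI, measure_univ, hswap, add_zero] at hsum
  rw [ENNReal.eq_div_iff two_ne_zero ENNReal.ofNat_ne_top, two_mul]
  exact hsum.symm

include hf hatom in
lemma half_lt : (ν.prod ν) {p : (ℝ × ℝ) × ℝ × ℝ | f p.2 < f p.1} = 1/2 := by
  have h : (ν.prod ν) {p : (ℝ × ℝ) × ℝ × ℝ | f p.2 < f p.1}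
      = (ν.prod ν) {p : (ℝ × ℝ) × ℝ × ℝ | f p.2 ≤ f p.1} := by
    apply measure_congr
    rw [MeasureTheory.ae_eq_set]
    constructor
    · have : {p : (ℝ × ℝ) × ℝ × ℝ | f p.2 < f p.1} \ {p : (ℝ × ℝ) × ℝ × ℝ | f p.2 ≤ f p.1}
          = ∅ := by
        ext p; simp only [Set.mem_diff, Set.mem_setOf_eq, Set.mem_empty_iff_false, iff_false]
        rintro ⟨h1, h2⟩; exact h2 h1.le
      simp [this]
    · apply measure_mono_null (μ := ν.prod ν) (t := {p : (ℝ × ℝ) × ℝ × ℝ | f p.1 = f p.2})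
      · rintro p ⟨h1, h2⟩
        simp only [Set.mem_setOf_eq] at *
        exact le_antisymm (not_lt.mp h2) h1
      · exact tie2 hf hatom
  rw [h]; exact half_le hf hatom

end Proj


lemma prob_both_le :
    (ν.prod ν) {p : (ℝ × ℝ) × ℝ × ℝ | p.2.1 ≤ p.1.1 ∧ p.2.2 ≤ p.1.2}
      = ∫⁻ z, ν {q : ℝ × ℝ | q.1 ≤ z.1 ∧ q.2 ≤ z.2} ∂ν := by
  have hs : MeasurableSet {p : (ℝ × ℝ) × ℝ × ℝ | p.2.1 ≤ p.1.1 ∧ p.2.2 ≤ p.1.2} := by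
    have : {p : (ℝ × ℝ) × ℝ × ℝ | p.2.1 ≤ p.1.1 ∧ p.2.2 ≤ p.1.2}
        = {p : (ℝ × ℝ) × ℝ × ℝ | p.2.1 ≤ p.1.1} ∩ {p : (ℝ × ℝ) × ℝ × ℝ | p.2.2 ≤ p.1.2} := rfl
    rw [this]
    exact (measurableSet_le (by fun_prop) (by fun_prop)).inter
      (measurableSet_le (by fun_prop) (by fun_prop))
  rw [Measure.prod_apply hs]
  rfl

lemma prob_both_lt (hacx : ∀ c, ν {q : ℝ × ℝ | q.1 = c} = 0)
    (hacy : ∀ c, ν {q : ℝ × ℝ | q.2 = c} = 0) :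
    (ν.prod ν) {p : (ℝ × ℝ) × ℝ × ℝ | p.2.1 < p.1.1 ∧ p.2.2 < p.1.2}
      = (ν.prod ν) {p : (ℝ × ℝ) × ℝ × ℝ | p.2.1 ≤ p.1.1 ∧ p.2.2 ≤ p.1.2} := by
  apply measure_congr
  rw [MeasureTheory.ae_eq_set]
  constructor
  · have : {p : (ℝ × ℝ) × ℝ × ℝ | p.2.1 < p.1.1 ∧ p.2.2 < p.1.2}
        \ {p : (ℝ × ℝ) × ℝ × ℝ | p.2.1 ≤ p.1.1 ∧ p.2.2 ≤ p.1.2} = ∅ := by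
      ext p
      simp only [Set.mem_diff, Set.mem_setOf_eq, Set.mem_empty_iff_false, iff_false]
      rintro ⟨⟨h1, h2⟩, h3⟩
      exact h3 ⟨h1.le, h2.le⟩
    simp [this]
  · apply measure_mono_null (μ := ν.prod ν)
      (t := {p : (ℝ × ℝ) × ℝ × ℝ | p.1.1 = p.2.1} ∪ {p : (ℝ × ℝ) × ℝ × ℝ | p.1.2 = p.2.2})
    · rintro p ⟨⟨h1, h2⟩, h3⟩
      simp only [Set.mem_setOf_eq, Set.mem_union]
      by_cases hx : p.2.1 < p.1.1
      · right
        have hy : ¬ p.2.2 < p.1.2 := fun hy => h3 ⟨hx, hy⟩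
        exact le_antisymm (not_lt.mp hy) h2
      · left
        exact le_antisymm (not_lt.mp hx) h1
    · exact measure_union_null (tie2 measurable_fst hacx) (tie2 measurable_snd hacy)

section Proj3

variable {f : ℝ × ℝ → ℝ} (hf : Measurable f) (hatom : ∀ c, ν {q | f q = c} = 0)

include hf hatom in
lemma tie3_12 : (ν.prod (ν.prod ν)) {p : (ℝ × ℝ) × (ℝ × ℝ) × ℝ × ℝ | f p.1 = f p.2.1} = 0 := by
  have hs : MeasurableSet {p : (ℝ × ℝ) × (ℝ × ℝ) × ℝ × ℝ | f p.1 = f p.2.1} :=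
    measurableSet_eq_fun (by fun_prop) (by fun_prop)
  rw [Measure.prod_apply hs]
  have h : ∀ z : ℝ × ℝ, (ν.prod ν) (Prod.mk z ⁻¹' {p : (ℝ × ℝ) × (ℝ × ℝ) × ℝ × ℝ | f p.1 = f p.2.1}) = 0 := by
    intro z
    have h2 : (Prod.mk z ⁻¹' {p : (ℝ × ℝ) × (ℝ × ℝ) × ℝ × ℝ | f p.1 = f p.2.1})
        = {x : ℝ × ℝ | f x = f z} ×ˢ (Set.univ : Set (ℝ × ℝ)) := by
      ext q; simp [Set.mem_prod, eq_comm]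
    rw [h2, Measure.prod_prod, hatom, zero_mul]
  simp only [h, lintegral_zero]

include hf hatom in
lemma tie3_13 : (ν.prod (ν.prod ν)) {p : (ℝ × ℝ) × (ℝ × ℝ) × ℝ × ℝ | f p.1 = f p.2.2} = 0 := by
  have hs : MeasurableSet {p : (ℝ × ℝ) × (ℝ × ℝ) × ℝ × ℝ | f p.1 = f p.2.2} :=
    measurableSet_eq_fun (by fun_prop) (by fun_prop)
  rw [Measure.prod_apply hs]
  have h : ∀ z : ℝ × ℝ, (ν.prod ν) (Prod.mk z ⁻¹' {p : (ℝ × ℝ) × (ℝ × ℝ) × ℝ × ℝ | f p.1 = f p.2.2}) = 0 := by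
    intro z
    have h2 : (Prod.mk z ⁻¹' {p : (ℝ × ℝ) × (ℝ × ℝ) × ℝ × ℝ | f p.1 = f p.2.2})
        = (Set.univ : Set (ℝ × ℝ)) ×ˢ {x : ℝ × ℝ | f x = f z} := by
      ext q; simp [Set.mem_prod, eq_comm]
    rw [h2, Measure.prod_prod, hatom, mul_zero]
  simp only [h, lintegral_zero]

include hf hatom in
lemma tie3_23 : (ν.prod (ν.prod ν)) {p : (ℝ × ℝ) × (ℝ × ℝ) × ℝ × ℝ | f p.2.1 = f p.2.2} = 0 := by
  have hs : MeasurableSet {p : (ℝ × ℝ) × (ℝ × ℝ) × ℝ × ℝ | f p.2.1 = f p.2.2} :=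
    measurableSet_eq_fun (by fun_prop) (by fun_prop)
  rw [Measure.prod_apply hs]
  have h : ∀ z : ℝ × ℝ, (ν.prod ν) (Prod.mk z ⁻¹' {p : (ℝ × ℝ) × (ℝ × ℝ) × ℝ × ℝ | f p.2.1 = f p.2.2}) = 0 := by
    intro z
    have h2 : (Prod.mk z ⁻¹' {p : (ℝ × ℝ) × (ℝ × ℝ) × ℝ × ℝ | f p.2.1 = f p.2.2})
        = {q : (ℝ × ℝ) × ℝ × ℝ | f q.1 = f q.2} := rfl
    rw [h2]
    exact tie2 hf hatom
  simp only [h, lintegral_zero]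

lemma mp_cycle : MeasurePreserving
    (fun p : (ℝ × ℝ) × (ℝ × ℝ) × ℝ × ℝ => (p.2.2, (p.1, p.2.1)))
    (ν.prod (ν.prod ν)) (ν.prod (ν.prod ν)) := by
  have h1 := ((measurePreserving_prodAssoc ν ν ν).symm MeasurableEquiv.prodAssoc)
  have h2 := Measure.measurePreserving_swap (μ := ν.prod ν) (ν := ν)
  have h3 := h2.comp h1
  have hfun : (Prod.swap ∘ (MeasurableEquiv.prodAssoc.symm :
        (ℝ × ℝ) × (ℝ × ℝ) × ℝ × ℝ → ((ℝ × ℝ) × ℝ × ℝ) × ℝ × ℝ))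
      = fun p : (ℝ × ℝ) × (ℝ × ℝ) × ℝ × ℝ => (p.2.2, (p.1, p.2.1)) := by
    funext p; rfl
  rw [hfun] at h3
  exact h3

end Proj3


lemma trich_key : ∀ a b c : ℝ, ¬(b < a ∧ c < a) → ¬(c < b ∧ a < b) → ¬(a < c ∧ b < c) →
    a = b ∨ a = c ∨ b = c := by
  intro a b c h1 h2 h3
  by_contra h; push_neg at h
  obtain ⟨hab, hac, hbc⟩ := h
  rcases lt_trichotomy a b with h|h|h
  · rcases lt_trichotomy b c with h'|h'|h'
    · exact h3 ⟨lt_trans h h', h'⟩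
    · exact hbc h'
    · exact h2 ⟨h', h⟩
  · exact hab h
  · rcases lt_trichotomy a c with h'|h'|h'
    · exact h3 ⟨h', lt_trans h h'⟩
    · exact hac h'
    · exact h1 ⟨h, h'⟩

section Proj3b

variable {f : ℝ × ℝ → ℝ} (hf : Measurable f) (hatom : ∀ c, ν {q | f q = c} = 0)

include hf hatom in
lemma third :
    (ν.prod (ν.prod ν)) {p : (ℝ × ℝ) × (ℝ × ℝ) × ℝ × ℝ | f p.2.1 ≤ f p.1 ∧ f p.2.2 ≤ f p.1}
      = 1/3 := by
  set m := ν.prod (ν.prod ν) with hm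
  set E1 : Set ((ℝ × ℝ) × (ℝ × ℝ) × ℝ × ℝ) := {p | f p.2.1 < f p.1 ∧ f p.2.2 < f p.1} with hE1def
  set E2 : Set ((ℝ × ℝ) × (ℝ × ℝ) × ℝ × ℝ) := {p | f p.2.2 < f p.2.1 ∧ f p.1 < f p.2.1} with hE2def
  set E3 : Set ((ℝ × ℝ) × (ℝ × ℝ) × ℝ × ℝ) := {p | f p.1 < f p.2.2 ∧ f p.2.1 < f p.2.2} with hE3def
  have hE1 : MeasurableSet E1 := by
    have hd : E1 = {p : (ℝ × ℝ) × (ℝ × ℝ) × ℝ × ℝ | f p.2.1 < f p.1} ∩ {p : (ℝ × ℝ) × (ℝ × ℝ) × ℝ × ℝ | f p.2.2 < f p.1} := rfl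
    rw [hd]
    exact (measurableSet_lt (by fun_prop) (by fun_prop)).inter
      (measurableSet_lt (by fun_prop) (by fun_prop))
  have hE2 : MeasurableSet E2 := by
    have hd : E2 = {p : (ℝ × ℝ) × (ℝ × ℝ) × ℝ × ℝ | f p.2.2 < f p.2.1} ∩ {p : (ℝ × ℝ) × (ℝ × ℝ) × ℝ × ℝ | f p.1 < f p.2.1} := rfl
    rw [hd]
    exact (measurableSet_lt (by fun_prop) (by fun_prop)).inter
      (measurableSet_lt (by fun_prop) (by fun_prop))
  have hE3 : MeasurableSet E3 := by
    have hd : E3 = {p : (ℝ × ℝ) × (ℝ × ℝ) × ℝ × ℝ | f p.1 < f p.2.2} ∩ {p : (ℝ × ℝ) × (ℝ × ℝ) × ℝ × ℝ | f p.2.1 < f p.2.2} := rfl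
    rw [hd]
    exact (measurableSet_lt (by fun_prop) (by fun_prop)).inter
      (measurableSet_lt (by fun_prop) (by fun_prop))
  have hcyc := (mp_cycle (ν := ν))
  have e31 : m E3 = m E1 := by
    have h := hcyc.measure_preimage hE1.nullMeasurableSet
    have hpre : (fun p : (ℝ × ℝ) × (ℝ × ℝ) × ℝ × ℝ => (p.2.2, (p.1, p.2.1))) ⁻¹' E1 = E3 := rfl
    rw [hpre] at h
    exact h
  have e23 : m E2 = m E3 := by
    have h := hcyc.measure_preimage hE3.nullMeasurableSet
    have hpre : (fun p : (ℝ × ℝ) × (ℝ × ℝ) × ℝ × ℝ => (p.2.2, (p.1, p.2.1))) ⁻¹' E3 = E2 := rfl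
    rw [hpre] at h
    exact h
  -- ties are null
  have ht12 := tie3_12 hf hatom
  have ht13 := tie3_13 hf hatom
  have ht23 := tie3_23 hf hatom
  -- disjointness
  have d12 : Disjoint E1 E2 := by
    rw [Set.disjoint_left]
    rintro p ⟨hp1, _⟩ ⟨_, hp2⟩
    exact lt_asymm hp1 hp2
  have d13 : Disjoint E1 E3 := by
    rw [Set.disjoint_left]
    rintro p ⟨_, hp1⟩ ⟨hp2, _⟩
    exact lt_asymm hp1 hp2
  have d23 : Disjoint E2 E3 := by
    rw [Set.disjoint_left]
    rintro p ⟨hp1, _⟩ ⟨_, hp2⟩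
    exact lt_asymm hp1 hp2
  -- union has full measure
  have hcompl : (E1 ∪ (E2 ∪ E3))ᶜ ⊆
      ({p : (ℝ × ℝ) × (ℝ × ℝ) × ℝ × ℝ | f p.1 = f p.2.1}
        ∪ ({p : (ℝ × ℝ) × (ℝ × ℝ) × ℝ × ℝ | f p.1 = f p.2.2}
        ∪ {p : (ℝ × ℝ) × (ℝ × ℝ) × ℝ × ℝ | f p.2.1 = f p.2.2})) := by
    intro p hp
    simp only [Set.mem_compl_iff, Set.mem_union, hE1def, hE2def, hE3def,
      Set.mem_setOf_eq, not_or] at hp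
    obtain ⟨h1, h2, h3⟩ := hp
    simpa [Set.mem_union, Set.mem_setOf_eq] using trich_key (f p.1) (f p.2.1) (f p.2.2) h1 h2 h3
  have hcompl0 : m (E1 ∪ (E2 ∪ E3))ᶜ = 0 :=
    measure_mono_null hcompl (measure_union_null ht12 (measure_union_null ht13 ht23))
  have hfull : m (E1 ∪ (E2 ∪ E3)) = 1 := by
    have := measure_add_measure_compl (μ := m) (hE1.union (hE2.union hE3))
    rw [hcompl0, add_zero, measure_univ] at this
    exact this
  have hsum : m E1 + (m E2 + m E3) = 1 := by
    rw [← measure_union (d23) hE3, ← measure_union (by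
      exact Set.disjoint_union_right.mpr ⟨d12, d13⟩) (hE2.union hE3)]
    exact hfull
  have hE1third : m E1 = 1/3 := by
    rw [e23, e31] at hsum
    rw [ENNReal.eq_div_iff (by norm_num : (3 : ℝ≥0∞) ≠ 0) (by simp : (3 : ℝ≥0∞) ≠ ⊤)]
    calc (3 : ℝ≥0∞) * m E1 = m E1 + (m E1 + m E1) := by ring
    _ = 1 := hsum
  -- nonstrict version
  have hae : m {p : (ℝ × ℝ) × (ℝ × ℝ) × ℝ × ℝ | f p.2.1 ≤ f p.1 ∧ f p.2.2 ≤ f p.1} = m E1 := by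
    apply measure_congr
    rw [MeasureTheory.ae_eq_set]
    constructor
    · apply measure_mono_null (μ := m)
        (t := {p : (ℝ × ℝ) × (ℝ × ℝ) × ℝ × ℝ | f p.1 = f p.2.1}
          ∪ {p : (ℝ × ℝ) × (ℝ × ℝ) × ℝ × ℝ | f p.1 = f p.2.2})
      · rintro p ⟨⟨h1, h2⟩, h3⟩
        simp only [hE1def, Set.mem_setOf_eq, not_and, not_lt] at h3
        simp only [Set.mem_union, Set.mem_setOf_eq]
        by_cases hx : f p.2.1 < f p.1
        · right; exact le_antisymm (h3 hx) h2
        · left; exact le_antisymm (not_lt.mp hx) h1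
      · exact measure_union_null ht12 ht13
    · have : E1 \ {p : (ℝ × ℝ) × (ℝ × ℝ) × ℝ × ℝ | f p.2.1 ≤ f p.1 ∧ f p.2.2 ≤ f p.1} = ∅ := by
        ext p
        simp only [Set.mem_diff, Set.mem_empty_iff_false, iff_false, hE1def, Set.mem_setOf_eq]
        rintro ⟨⟨h1, h2⟩, h3⟩
        exact h3 ⟨h1.le, h2.le⟩
      simp [this]
  rw [hae, hE1third]

end Proj3b

lemma prob_q :
    (ν.prod (ν.prod ν)) {p : (ℝ × ℝ) × (ℝ × ℝ) × ℝ × ℝ | p.2.1.1 ≤ p.1.1 ∧ p.2.2.2 ≤ p.1.2}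
      = ∫⁻ z, ν {q : ℝ × ℝ | q.1 ≤ z.1} * ν {q : ℝ × ℝ | q.2 ≤ z.2} ∂ν := by
  have hs : MeasurableSet {p : (ℝ × ℝ) × (ℝ × ℝ) × ℝ × ℝ | p.2.1.1 ≤ p.1.1 ∧ p.2.2.2 ≤ p.1.2} := by
    have hd : {p : (ℝ × ℝ) × (ℝ × ℝ) × ℝ × ℝ | p.2.1.1 ≤ p.1.1 ∧ p.2.2.2 ≤ p.1.2}
        = {p : (ℝ × ℝ) × (ℝ × ℝ) × ℝ × ℝ | p.2.1.1 ≤ p.1.1}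
          ∩ {p : (ℝ × ℝ) × (ℝ × ℝ) × ℝ × ℝ | p.2.2.2 ≤ p.1.2} := rfl
    rw [hd]
    exact (measurableSet_le (by fun_prop) (by fun_prop)).inter
      (measurableSet_le (by fun_prop) (by fun_prop))
  rw [Measure.prod_apply hs]
  apply lintegral_congr
  intro z
  have h2 : (Prod.mk z ⁻¹' {p : (ℝ × ℝ) × (ℝ × ℝ) × ℝ × ℝ | p.2.1.1 ≤ p.1.1 ∧ p.2.2.2 ≤ p.1.2})
      = {a : ℝ × ℝ | a.1 ≤ z.1} ×ˢ {b : ℝ × ℝ | b.2 ≤ z.2} := by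
    ext q; simp [Set.mem_prod]
  rw [h2, Measure.prod_prod]


lemma abs_sign_le (x : ℝ) : |Real.sign x| ≤ 1 := by
  rcases Real.sign_apply_eq x with h | h | h <;> rw [h] <;> norm_num

lemma ind_one {α : Type*} (s : Set α) (x : α) (hx : x ∈ s) :
    s.indicator (fun _ => (1 : ℝ)) x = 1 := Set.indicator_of_mem hx _

lemma ind_zero {α : Type*} (s : Set α) (x : α) (hx : x ∉ s) :
    s.indicator (fun _ => (1 : ℝ)) x = 0 := Set.indicator_of_notMem hx _

lemma integral_indicator_one' {α : Type*} [MeasurableSpace α] (m : Measure α)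
    [IsFiniteMeasure m] {s : Set α} (hs : MeasurableSet s) :
    ∫ x, s.indicator (fun _ => (1 : ℝ)) x ∂m = (m s).toReal :=
  integral_indicator_one hs

lemma integrable_indicator_one {α : Type*} [MeasurableSpace α] (m : Measure α)
    [IsFiniteMeasure m] {s : Set α} (hs : MeasurableSet s) :
    Integrable (fun x => s.indicator (fun _ => (1 : ℝ)) x) m :=
  (integrable_const (1 : ℝ)).indicator hs

lemma ind_sub_mul_eq {α : Type*} (A B C D : Set α) :
    (fun x => (A.indicator (fun _ => (1 : ℝ)) x - B.indicator (fun _ => (1 : ℝ)) x)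
        * (C.indicator (fun _ => (1 : ℝ)) x - D.indicator (fun _ => (1 : ℝ)) x))
      = fun x => (A ∩ C).indicator (fun _ => (1 : ℝ)) x - (A ∩ D).indicator (fun _ => (1 : ℝ)) x
          - (B ∩ C).indicator (fun _ => (1 : ℝ)) x + (B ∩ D).indicator (fun _ => (1 : ℝ)) x := by
  funext x
  by_cases hA : x ∈ A <;> by_cases hB : x ∈ B <;> by_cases hC : x ∈ C <;> by_cases hD : x ∈ D <;>
    simp [Set.indicator_apply, hA, hB, hC, hD] <;> ring

lemma integrable_ind_sub_mul {α : Type*} [MeasurableSpace α] (m : Measure α)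
    [IsFiniteMeasure m] {A B C D : Set α} (hA : MeasurableSet A) (hB : MeasurableSet B)
    (hC : MeasurableSet C) (hD : MeasurableSet D) :
    Integrable (fun x => (A.indicator (fun _ => (1 : ℝ)) x - B.indicator (fun _ => (1 : ℝ)) x)
        * (C.indicator (fun _ => (1 : ℝ)) x - D.indicator (fun _ => (1 : ℝ)) x)) m := by
  rw [ind_sub_mul_eq]
  exact (((integrable_indicator_one m (hA.inter hC)).sub
    (integrable_indicator_one m (hA.inter hD))).sub
    (integrable_indicator_one m (hB.inter hC))).add (integrable_indicator_one m (hB.inter hD))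

lemma integral_ind_sub_mul {α : Type*} [MeasurableSpace α] (m : Measure α)
    [IsFiniteMeasure m] {A B C D : Set α} (hA : MeasurableSet A) (hB : MeasurableSet B)
    (hC : MeasurableSet C) (hD : MeasurableSet D) :
    ∫ x, (A.indicator (fun _ => (1 : ℝ)) x - B.indicator (fun _ => (1 : ℝ)) x)
        * (C.indicator (fun _ => (1 : ℝ)) x - D.indicator (fun _ => (1 : ℝ)) x) ∂m
      = (m (A ∩ C)).toReal - (m (A ∩ D)).toReal - (m (B ∩ C)).toReal + (m (B ∩ D)).toReal := by
  rw [ind_sub_mul_eq]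
  have iAC : Integrable (fun x => (A ∩ C).indicator (fun _ => (1 : ℝ)) x) m :=
    integrable_indicator_one m (hA.inter hC)
  have iAD : Integrable (fun x => (A ∩ D).indicator (fun _ => (1 : ℝ)) x) m :=
    integrable_indicator_one m (hA.inter hD)
  have iBC : Integrable (fun x => (B ∩ C).indicator (fun _ => (1 : ℝ)) x) m :=
    integrable_indicator_one m (hB.inter hC)
  have iBD : Integrable (fun x => (B ∩ D).indicator (fun _ => (1 : ℝ)) x) m :=
    integrable_indicator_one m (hB.inter hD)
  have i12 : Integrable (fun x => (A ∩ C).indicator (fun _ => (1 : ℝ)) x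
      - (A ∩ D).indicator (fun _ => (1 : ℝ)) x) m := iAC.sub iAD
  have i123 : Integrable (fun x => (A ∩ C).indicator (fun _ => (1 : ℝ)) x
      - (A ∩ D).indicator (fun _ => (1 : ℝ)) x - (B ∩ C).indicator (fun _ => (1 : ℝ)) x) m :=
    i12.sub iBC
  rw [integral_add i123 iBD, integral_sub i12 iBC, integral_sub iAC iAD,
    integral_indicator_one' m (hA.inter hC), integral_indicator_one' m (hA.inter hD),
    integral_indicator_one' m (hB.inter hC), integral_indicator_one' m (hB.inter hD)]

lemma integral_sign (hacx : ∀ c, ν {q : ℝ × ℝ | q.1 = c} = 0)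
    (hacy : ∀ c, ν {q : ℝ × ℝ | q.2 = c} = 0) :
    ∫ w : (ℝ × ℝ) × ℝ × ℝ, Real.sign (w.1.1 - w.2.1) * Real.sign (w.1.2 - w.2.2) ∂(ν.prod ν)
      = 4 * ((ν.prod ν) {p : (ℝ × ℝ) × ℝ × ℝ | p.2.1 ≤ p.1.1 ∧ p.2.2 ≤ p.1.2}).toReal - 1 := by
  set m := ν.prod ν with hm
  set S1 : Set ((ℝ × ℝ) × ℝ × ℝ) := {w | w.2.1 < w.1.1} with hS1def
  set S2 : Set ((ℝ × ℝ) × ℝ × ℝ) := {w | w.2.2 < w.1.2} with hS2def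
  have hS1m : MeasurableSet S1 := measurableSet_lt (by fun_prop) (by fun_prop)
  have hS2m : MeasurableSet S2 := measurableSet_lt (by fun_prop) (by fun_prop)
  have hS1v : m S1 = 1/2 := half_lt measurable_fst hacx
  have hS2v : m S2 = 1/2 := half_lt measurable_snd hacy
  have hSv : m (S1 ∩ S2) = m {p : (ℝ × ℝ) × ℝ × ℝ | p.2.1 ≤ p.1.1 ∧ p.2.2 ≤ p.1.2} := by
    have h : S1 ∩ S2 = {p : (ℝ × ℝ) × ℝ × ℝ | p.2.1 < p.1.1 ∧ p.2.2 < p.1.2} := rfl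
    rw [h]
    exact prob_both_lt hacx hacy
  have h1' : ∀ᵐ w ∂m, ¬ (w.1.1 = w.2.1) := by
    rw [ae_iff]; simpa [not_not] using tie2 measurable_fst hacx
  have h2' : ∀ᵐ w ∂m, ¬ (w.1.2 = w.2.2) := by
    rw [ae_iff]; simpa [not_not] using tie2 measurable_snd hacy
  have hae : ∀ᵐ w ∂m, Real.sign (w.1.1 - w.2.1) * Real.sign (w.1.2 - w.2.2)
      = 4 * (S1 ∩ S2).indicator (fun _ => (1 : ℝ)) w - 2 * S1.indicator (fun _ => (1 : ℝ)) w
        - 2 * S2.indicator (fun _ => (1 : ℝ)) w + 1 := by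
    filter_upwards [h1', h2'] with w hw1 hw2
    rcases (Ne.lt_or_gt hw1) with hx | hx <;> rcases (Ne.lt_or_gt hw2) with hy | hy
    · have m1 : w ∉ S1 := not_lt.mpr hx.le
      have m2 : w ∉ S2 := not_lt.mpr hy.le
      have m0 : w ∉ S1 ∩ S2 := fun h => m1 h.1
      rw [Real.sign_of_neg (by linarith), Real.sign_of_neg (by linarith),
        ind_zero _ w m0, ind_zero _ w m1, ind_zero _ w m2]
      norm_num
    · have m1 : w ∉ S1 := not_lt.mpr hx.le
      have m2 : w ∈ S2 := hy
      have m0 : w ∉ S1 ∩ S2 := fun h => m1 h.1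
      rw [Real.sign_of_neg (by linarith), Real.sign_of_pos (by linarith),
        ind_zero _ w m0, ind_zero _ w m1, ind_one _ w m2]
      norm_num
    · have m1 : w ∈ S1 := hx
      have m2 : w ∉ S2 := not_lt.mpr hy.le
      have m0 : w ∉ S1 ∩ S2 := fun h => m2 h.2
      rw [Real.sign_of_pos (by linarith), Real.sign_of_neg (by linarith),
        ind_zero _ w m0, ind_one _ w m1, ind_zero _ w m2]
      norm_num
    · have m1 : w ∈ S1 := hx
      have m2 : w ∈ S2 := hy
      have m0 : w ∈ S1 ∩ S2 := ⟨m1, m2⟩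
      rw [Real.sign_of_pos (by linarith), Real.sign_of_pos (by linarith),
        ind_one _ w m0, ind_one _ w m1, ind_one _ w m2]
      norm_num
  rw [integral_congr_ae hae]
  have i0 : Integrable (fun w => (S1 ∩ S2).indicator (fun _ => (1 : ℝ)) w) m :=
    integrable_indicator_one m (hS1m.inter hS2m)
  have i1 : Integrable (fun w => S1.indicator (fun _ => (1 : ℝ)) w) m :=
    integrable_indicator_one m hS1m
  have i2 : Integrable (fun w => S2.indicator (fun _ => (1 : ℝ)) w) m :=
    integrable_indicator_one m hS2m
  have j0 : Integrable (fun w => 4 * (S1 ∩ S2).indicator (fun _ => (1 : ℝ)) w) m := i0.const_mul 4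
  have j1 : Integrable (fun w => 2 * S1.indicator (fun _ => (1 : ℝ)) w) m := i1.const_mul 2
  have j2 : Integrable (fun w => 2 * S2.indicator (fun _ => (1 : ℝ)) w) m := i2.const_mul 2
  have j01 : Integrable (fun w => 4 * (S1 ∩ S2).indicator (fun _ => (1 : ℝ)) w
      - 2 * S1.indicator (fun _ => (1 : ℝ)) w) m := j0.sub j1
  have j012 : Integrable (fun w => 4 * (S1 ∩ S2).indicator (fun _ => (1 : ℝ)) w
      - 2 * S1.indicator (fun _ => (1 : ℝ)) w - 2 * S2.indicator (fun _ => (1 : ℝ)) w) m :=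
    j01.sub j2
  rw [integral_add j012 (integrable_const 1), integral_sub j01 j2, integral_sub j0 j1,
    integral_const_mul, integral_const_mul, integral_const_mul,
    integral_indicator_one' m (hS1m.inter hS2m), integral_indicator_one' m hS1m,
    integral_indicator_one' m hS2m, integral_const]
  rw [hSv, hS1v, hS2v]
  simp [measure_univ, ENNReal.toReal_div]

end KRAux



theorem expectation_rn_and_asymptotic_unbiasedness
    {Ω : Type*} [MeasurableSpace Ω] {μ : Measure Ω} [IsProbabilityMeasure μ]
    (X Y : ℕ → Ω → ℝ) (X₀ Y₀ : Ω → ℝ)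
    (hX : ∀ i, Measurable (X i)) (hY : ∀ i, Measurable (Y i))
    (hX₀ : Measurable X₀) (hY₀ : Measurable Y₀)
    (F : ℝ → ℝ → ℝ) (H G : ℝ → ℝ)
    (hF : ∀ x y, F x y = (μ {ω | X₀ ω ≤ x ∧ Y₀ ω ≤ y}).toReal)
    (hH : ∀ x, H x = (μ {ω | X₀ ω ≤ x}).toReal)
    (hG : ∀ y, G y = (μ {ω | Y₀ ω ≤ y}).toReal)
    (habs : Measure.map (fun ω => (X₀ ω, Y₀ ω)) μ ≪ (volume : Measure (ℝ × ℝ)))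
    (hident : ∀ i, Measure.map (fun ω => (X i ω, Y i ω)) μ
      = Measure.map (fun ω => (X₀ ω, Y₀ ω)) μ)
    (hindep : iIndepFun
      (fun i ω => (X i ω, Y i ω)) μ)
    (hFint : Integrable (fun ω => F (X₀ ω) (Y₀ ω)) μ)
    (hHGint : Integrable (fun ω => H (X₀ ω) * G (Y₀ ω)) μ)
    (τ ρS : ℝ)
    (hτ : τ = 4 * ∫ ω, F (X₀ ω) (Y₀ ω) ∂μ - 1)
    (hρS : ρS = 12 * ∫ ω, H (X₀ ω) * G (Y₀ ω) ∂μ - 3)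
    (τseq ρseq rseq : ℕ → Ω → ℝ)
    (hτseq : ∀ n ω, τseq n ω = 2 / ((n : ℝ) * ((n : ℝ) - 1)) *
      ∑ j ∈ range n, ∑ i ∈ range j,
        Real.sign (X i ω - X j ω) * Real.sign (Y i ω - Y j ω))
    (hρseq : ∀ n ω, ρseq n ω = 1 - 6 * (∑ i ∈ range n,
        ((((range n).filter (fun j => X j ω ≤ X i ω)).card : ℝ)
          - (((range n).filter (fun j => Y j ω ≤ Y i ω)).card : ℝ)) ^ 2)
        / ((n : ℝ) ^ 3 - n))
    (hrseq : ∀ n ω, rseq n ω = 1.5 * τseq n ω - 0.5 * ρseq n ω) :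
    (∀ n, 2 ≤ n → ∫ ω, rseq n ω ∂μ
        = (3 * (n : ℝ) * τ - ((n : ℝ) - 2) * ρS) / (2 * ((n : ℝ) + 1))) ∧
      Tendsto (fun n => ∫ ω, rseq n ω ∂μ) atTop (nhds ((3 * τ - ρS) / 2)) := by
  classical
  have hXY₀ : Measurable fun ω => (X₀ ω, Y₀ ω) := hX₀.prodMk hY₀
  set ν : Measure (ℝ × ℝ) := Measure.map (fun ω => (X₀ ω, Y₀ ω)) μ with hνdef
  haveI hνprob : IsProbabilityMeasure ν := Measure.isProbabilityMeasure_map hXY₀.aemeasurable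
  set Z : ℕ → Ω → ℝ × ℝ := fun i ω => (X i ω, Y i ω) with hZdef
  have hZ : ∀ i, Measurable (Z i) := fun i => (hX i).prodMk (hY i)
  have hmapZ : ∀ i, Measure.map (Z i) μ = ν := fun i => hident i
  have hacx : ∀ c, ν {q : ℝ × ℝ | q.1 = c} = 0 := KRAux.atom_fst habs
  have hacy : ∀ c, ν {q : ℝ × ℝ | q.2 = c} = 0 := KRAux.atom_snd habs
  -- joint laws
  have hpair : ∀ i j, i ≠ j → Measure.map (fun ω => (Z i ω, Z j ω)) μ = ν.prod ν := by
    intro i j hij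
    have h := hindep.indepFun hij
    rw [indepFun_iff_map_prod_eq_prod_map_map (hZ i).aemeasurable (hZ j).aemeasurable] at h
    rw [h, hmapZ i, hmapZ j]
  have htriple : ∀ i j k, j ≠ i → k ≠ i → j ≠ k →
      Measure.map (fun ω => (Z i ω, (Z j ω, Z k ω))) μ = ν.prod (ν.prod ν) := by
    intro i j k hji hki hjk
    have h1 : IndepFun (Z i) (fun ω => (Z j ω, Z k ω)) μ :=
      (hindep.indepFun_prodMk hZ j k i hji hki).symm
    rw [indepFun_iff_map_prod_eq_prod_map_map (hZ i).aemeasurable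
      ((hZ j).prodMk (hZ k)).aemeasurable] at h1
    rw [h1, hmapZ i, hpair j k hjk]
  -- measurable sets
  have hsF : MeasurableSet {p : (ℝ × ℝ) × ℝ × ℝ | p.2.1 ≤ p.1.1 ∧ p.2.2 ≤ p.1.2} := by
    have hd : {p : (ℝ × ℝ) × ℝ × ℝ | p.2.1 ≤ p.1.1 ∧ p.2.2 ≤ p.1.2}
        = {p : (ℝ × ℝ) × ℝ × ℝ | p.2.1 ≤ p.1.1} ∩ {p : (ℝ × ℝ) × ℝ × ℝ | p.2.2 ≤ p.1.2} := rfl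
    rw [hd]
    exact (measurableSet_le (by fun_prop) (by fun_prop)).inter
      (measurableSet_le (by fun_prop) (by fun_prop))
  have hsH1 : MeasurableSet {p : (ℝ × ℝ) × ℝ × ℝ | p.2.1 ≤ p.1.1} :=
    measurableSet_le (by fun_prop) (by fun_prop)
  have hsG1 : MeasurableSet {p : (ℝ × ℝ) × ℝ × ℝ | p.2.2 ≤ p.1.2} :=
    measurableSet_le (by fun_prop) (by fun_prop)
  have hmF : Measurable (fun z : ℝ × ℝ => ν {q : ℝ × ℝ | q.1 ≤ z.1 ∧ q.2 ≤ z.2}) :=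
    measurable_measure_prodMk_left hsF
  have hmH : Measurable (fun z : ℝ × ℝ => ν {q : ℝ × ℝ | q.1 ≤ z.1}) :=
    measurable_measure_prodMk_left hsH1
  have hmG : Measurable (fun z : ℝ × ℝ => ν {q : ℝ × ℝ | q.2 ≤ z.2}) :=
    measurable_measure_prodMk_left hsG1
  have hsF2 : ∀ x y : ℝ, MeasurableSet {q : ℝ × ℝ | q.1 ≤ x ∧ q.2 ≤ y} := by
    intro x y
    have hd : {q : ℝ × ℝ | q.1 ≤ x ∧ q.2 ≤ y}
        = {q : ℝ × ℝ | q.1 ≤ x} ∩ {q : ℝ × ℝ | q.2 ≤ y} := rfl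
    rw [hd]
    exact (measurableSet_le measurable_fst measurable_const).inter
      (measurableSet_le measurable_snd measurable_const)
  have hsH2 : ∀ x : ℝ, MeasurableSet {q : ℝ × ℝ | q.1 ≤ x} :=
    fun x => measurableSet_le measurable_fst measurable_const
  have hsG2 : ∀ y : ℝ, MeasurableSet {q : ℝ × ℝ | q.2 ≤ y} :=
    fun y => measurableSet_le measurable_snd measurable_const
  -- CDF identifications
  have hFν : ∀ x y, F x y = (ν {q : ℝ × ℝ | q.1 ≤ x ∧ q.2 ≤ y}).toReal := by
    intro x y
    rw [hF x y]
    congr 1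
    rw [hνdef, Measure.map_apply hXY₀ (hsF2 x y)]
    rfl
  have hHν : ∀ x, H x = (ν {q : ℝ × ℝ | q.1 ≤ x}).toReal := by
    intro x
    rw [hH x]
    congr 1
    rw [hνdef, Measure.map_apply hXY₀ (hsH2 x)]
    rfl
  have hGν : ∀ y, G y = (ν {q : ℝ × ℝ | q.2 ≤ y}).toReal := by
    intro y
    rw [hG y]
    congr 1
    rw [hνdef, Measure.map_apply hXY₀ (hsG2 y)]
    rfl
  -- the two fundamental quantities
  set pR : ℝ := ∫ ω, F (X₀ ω) (Y₀ ω) ∂μ with hpRdef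
  set qR : ℝ := ∫ ω, H (X₀ ω) * G (Y₀ ω) ∂μ with hqRdef
  set pE : ENNReal := ∫⁻ z, ν {q : ℝ × ℝ | q.1 ≤ z.1 ∧ q.2 ≤ z.2} ∂ν with hpEdef
  set qE : ENNReal := ∫⁻ z, ν {q : ℝ × ℝ | q.1 ≤ z.1} * ν {q : ℝ × ℝ | q.2 ≤ z.2} ∂ν with hqEdef
  have hpval : pE.toReal = pR := by
    rw [hpEdef, hpRdef, ← integral_toReal hmF.aemeasurable
      (ae_of_all _ fun z => measure_lt_top ν _)]
    rw [hνdef, integral_map hXY₀.aemeasurable hmF.ennreal_toReal.aestronglyMeasurable]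
    refine integral_congr_ae (ae_of_all _ fun ω => ?_)
    simp [hFν]
  have hqval : qE.toReal = qR := by
    rw [hqEdef, hqRdef, ← integral_toReal (f := fun z : ℝ × ℝ => ν {q : ℝ × ℝ | q.1 ≤ z.1} * ν {q : ℝ × ℝ | q.2 ≤ z.2})
      (hmH.mul hmG).aemeasurable
      (ae_of_all _ fun z => ENNReal.mul_lt_top (measure_lt_top ν _) (measure_lt_top ν _))]
    rw [hνdef, integral_map hXY₀.aemeasurable (f := fun z : ℝ × ℝ =>
      (ν {q : ℝ × ℝ | q.1 ≤ z.1} * ν {q : ℝ × ℝ | q.2 ≤ z.2}).toReal)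
      (hmH.mul hmG).ennreal_toReal.aestronglyMeasurable]
    refine integral_congr_ae (ae_of_all _ fun ω => ?_)
    simp [hHν, hGν, ENNReal.toReal_mul]
  -- transfer of probabilities
  have hmu2 : ∀ i j, i ≠ j → ∀ s : Set ((ℝ × ℝ) × ℝ × ℝ), MeasurableSet s →
      μ ((fun ω => (Z i ω, Z j ω)) ⁻¹' s) = (ν.prod ν) s := by
    intro i j hij s hs
    rw [← hpair i j hij, Measure.map_apply ((hZ i).prodMk (hZ j)) hs]
  have hmu3 : ∀ i j k, j ≠ i → k ≠ i → j ≠ k →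
      ∀ s : Set ((ℝ × ℝ) × (ℝ × ℝ) × ℝ × ℝ), MeasurableSet s →
      μ ((fun ω => (Z i ω, (Z j ω, Z k ω))) ⁻¹' s) = (ν.prod (ν.prod ν)) s := by
    intro i j k hji hki hjk s hs
    rw [← htriple i j k hji hki hjk,
      Measure.map_apply ((hZ i).prodMk ((hZ j).prodMk (hZ k))) hs]
  have hPx : ∀ i j, i ≠ j → μ {ω | X j ω ≤ X i ω} = 1/2 := by
    intro i j hij
    have h := hmu2 i j hij {p : (ℝ × ℝ) × ℝ × ℝ | p.2.1 ≤ p.1.1} hsH1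
    have hpre : ((fun ω => (Z i ω, Z j ω)) ⁻¹' {p : (ℝ × ℝ) × ℝ × ℝ | p.2.1 ≤ p.1.1})
        = {ω | X j ω ≤ X i ω} := rfl
    rw [hpre] at h
    rw [h]
    exact KRAux.half_le measurable_fst hacx
  have hPy : ∀ i j, i ≠ j → μ {ω | Y j ω ≤ Y i ω} = 1/2 := by
    intro i j hij
    have h := hmu2 i j hij {p : (ℝ × ℝ) × ℝ × ℝ | p.2.2 ≤ p.1.2} hsG1
    have hpre : ((fun ω => (Z i ω, Z j ω)) ⁻¹' {p : (ℝ × ℝ) × ℝ × ℝ | p.2.2 ≤ p.1.2})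
        = {ω | Y j ω ≤ Y i ω} := rfl
    rw [hpre] at h
    rw [h]
    exact KRAux.half_le measurable_snd hacy
  have hPboth : ∀ i j, i ≠ j → μ {ω | X j ω ≤ X i ω ∧ Y j ω ≤ Y i ω} = pE := by
    intro i j hij
    have h := hmu2 i j hij {p : (ℝ × ℝ) × ℝ × ℝ | p.2.1 ≤ p.1.1 ∧ p.2.2 ≤ p.1.2} hsF
    have hpre : ((fun ω => (Z i ω, Z j ω)) ⁻¹'
        {p : (ℝ × ℝ) × ℝ × ℝ | p.2.1 ≤ p.1.1 ∧ p.2.2 ≤ p.1.2})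
        = {ω | X j ω ≤ X i ω ∧ Y j ω ≤ Y i ω} := rfl
    rw [hpre] at h
    rw [h, KRAux.prob_both_le]
  have hsXX : MeasurableSet {p : (ℝ × ℝ) × (ℝ × ℝ) × ℝ × ℝ | p.2.1.1 ≤ p.1.1 ∧ p.2.2.1 ≤ p.1.1} := by
    have hd : {p : (ℝ × ℝ) × (ℝ × ℝ) × ℝ × ℝ | p.2.1.1 ≤ p.1.1 ∧ p.2.2.1 ≤ p.1.1}
        = {p : (ℝ × ℝ) × (ℝ × ℝ) × ℝ × ℝ | p.2.1.1 ≤ p.1.1}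
          ∩ {p : (ℝ × ℝ) × (ℝ × ℝ) × ℝ × ℝ | p.2.2.1 ≤ p.1.1} := rfl
    rw [hd]
    exact (measurableSet_le (by fun_prop) (by fun_prop)).inter
      (measurableSet_le (by fun_prop) (by fun_prop))
  have hsYY : MeasurableSet {p : (ℝ × ℝ) × (ℝ × ℝ) × ℝ × ℝ | p.2.1.2 ≤ p.1.2 ∧ p.2.2.2 ≤ p.1.2} := by
    have hd : {p : (ℝ × ℝ) × (ℝ × ℝ) × ℝ × ℝ | p.2.1.2 ≤ p.1.2 ∧ p.2.2.2 ≤ p.1.2}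
        = {p : (ℝ × ℝ) × (ℝ × ℝ) × ℝ × ℝ | p.2.1.2 ≤ p.1.2}
          ∩ {p : (ℝ × ℝ) × (ℝ × ℝ) × ℝ × ℝ | p.2.2.2 ≤ p.1.2} := rfl
    rw [hd]
    exact (measurableSet_le (by fun_prop) (by fun_prop)).inter
      (measurableSet_le (by fun_prop) (by fun_prop))
  have hsXY : MeasurableSet {p : (ℝ × ℝ) × (ℝ × ℝ) × ℝ × ℝ | p.2.1.1 ≤ p.1.1 ∧ p.2.2.2 ≤ p.1.2} := by
    have hd : {p : (ℝ × ℝ) × (ℝ × ℝ) × ℝ × ℝ | p.2.1.1 ≤ p.1.1 ∧ p.2.2.2 ≤ p.1.2}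
        = {p : (ℝ × ℝ) × (ℝ × ℝ) × ℝ × ℝ | p.2.1.1 ≤ p.1.1}
          ∩ {p : (ℝ × ℝ) × (ℝ × ℝ) × ℝ × ℝ | p.2.2.2 ≤ p.1.2} := rfl
    rw [hd]
    exact (measurableSet_le (by fun_prop) (by fun_prop)).inter
      (measurableSet_le (by fun_prop) (by fun_prop))
  have hPxx : ∀ i j k, j ≠ i → k ≠ i → j ≠ k →
      μ {ω | X j ω ≤ X i ω ∧ X k ω ≤ X i ω} = 1/3 := by
    intro i j k hji hki hjk
    have h := hmu3 i j k hji hki hjk _ hsXX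
    have hpre : ((fun ω => (Z i ω, (Z j ω, Z k ω))) ⁻¹'
        {p : (ℝ × ℝ) × (ℝ × ℝ) × ℝ × ℝ | p.2.1.1 ≤ p.1.1 ∧ p.2.2.1 ≤ p.1.1})
        = {ω | X j ω ≤ X i ω ∧ X k ω ≤ X i ω} := rfl
    rw [hpre] at h
    rw [h]
    exact KRAux.third measurable_fst hacx
  have hPyy : ∀ i j k, j ≠ i → k ≠ i → j ≠ k →
      μ {ω | Y j ω ≤ Y i ω ∧ Y k ω ≤ Y i ω} = 1/3 := by
    intro i j k hji hki hjk
    have h := hmu3 i j k hji hki hjk _ hsYY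
    have hpre : ((fun ω => (Z i ω, (Z j ω, Z k ω))) ⁻¹'
        {p : (ℝ × ℝ) × (ℝ × ℝ) × ℝ × ℝ | p.2.1.2 ≤ p.1.2 ∧ p.2.2.2 ≤ p.1.2})
        = {ω | Y j ω ≤ Y i ω ∧ Y k ω ≤ Y i ω} := rfl
    rw [hpre] at h
    rw [h]
    exact KRAux.third measurable_snd hacy
  have hPxy : ∀ i j k, j ≠ i → k ≠ i → j ≠ k →
      μ {ω | X j ω ≤ X i ω ∧ Y k ω ≤ Y i ω} = qE := by
    intro i j k hji hki hjk
    have h := hmu3 i j k hji hki hjk _ hsXY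
    have hpre : ((fun ω => (Z i ω, (Z j ω, Z k ω))) ⁻¹'
        {p : (ℝ × ℝ) × (ℝ × ℝ) × ℝ × ℝ | p.2.1.1 ≤ p.1.1 ∧ p.2.2.2 ≤ p.1.2})
        = {ω | X j ω ≤ X i ω ∧ Y k ω ≤ Y i ω} := rfl
    rw [hpre] at h
    rw [h, KRAux.prob_q]
  have hPyx : ∀ i j k, j ≠ i → k ≠ i → j ≠ k →
      μ {ω | Y j ω ≤ Y i ω ∧ X k ω ≤ X i ω} = qE := by
    intro i j k hji hki hjk
    have hseteq : {ω | Y j ω ≤ Y i ω ∧ X k ω ≤ X i ω}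
        = {ω | X k ω ≤ X i ω ∧ Y j ω ≤ Y i ω} := by
      ext ω; exact and_comm
    rw [hseteq]
    exact hPxy i k j hki hji (Ne.symm hjk)
  -- sign integrals
  have hsgnmeas : Measurable (fun w : (ℝ × ℝ) × ℝ × ℝ =>
      Real.sign (w.1.1 - w.2.1) * Real.sign (w.1.2 - w.2.2)) :=
    (KRAux.measurable_rsign.comp ((measurable_fst.fst).sub (measurable_snd.fst))).mul
      (KRAux.measurable_rsign.comp ((measurable_fst.snd).sub (measurable_snd.snd)))
  have hsgn_int : ∀ i j : ℕ, Integrable (fun ω =>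
      Real.sign (X i ω - X j ω) * Real.sign (Y i ω - Y j ω)) μ := by
    intro i j
    refine Integrable.mono' (integrable_const 1) ?_ (ae_of_all _ fun ω => ?_)
    · exact ((KRAux.measurable_rsign.comp ((hX i).sub (hX j))).mul
        (KRAux.measurable_rsign.comp ((hY i).sub (hY j)))).aestronglyMeasurable
    · rw [Real.norm_eq_abs, abs_mul]
      calc |Real.sign (X i ω - X j ω)| * |Real.sign (Y i ω - Y j ω)|
          ≤ 1 * 1 := mul_le_mul (KRAux.abs_sign_le _) (KRAux.abs_sign_le _)
            (abs_nonneg _) zero_le_one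
        _ = 1 := one_mul 1
  have hsgnval : ∀ i j, i ≠ j →
      ∫ ω, Real.sign (X i ω - X j ω) * Real.sign (Y i ω - Y j ω) ∂μ = τ := by
    intro i j hij
    have h2 := integral_map (μ := μ) ((hZ i).prodMk (hZ j)).aemeasurable
      (f := fun w : (ℝ × ℝ) × ℝ × ℝ => Real.sign (w.1.1 - w.2.1) * Real.sign (w.1.2 - w.2.2))
      hsgnmeas.aestronglyMeasurable
    rw [hpair i j hij] at h2
    have h3 : ∫ ω, Real.sign (X i ω - X j ω) * Real.sign (Y i ω - Y j ω) ∂μ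
        = ∫ w : (ℝ × ℝ) × ℝ × ℝ,
            Real.sign (w.1.1 - w.2.1) * Real.sign (w.1.2 - w.2.2) ∂(ν.prod ν) := h2.symm
    rw [h3, KRAux.integral_sign hacx hacy, KRAux.prob_both_le, ← hpEdef, hpval, hτ]
  -- constants
  have htoReal_half : ((1 : ENNReal)/2).toReal = (1/2 : ℝ) := by
    simp [ENNReal.toReal_div]
  have htoReal_third : ((1 : ENNReal)/3).toReal = (1/3 : ℝ) := by
    simp [ENNReal.toReal_div]
  -- main formula for each n ≥ 2
  have hmain : ∀ n, 2 ≤ n → ∫ ω, rseq n ω ∂μ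
      = (3 * (n : ℝ) * τ - ((n : ℝ) - 2) * ρS) / (2 * ((n : ℝ) + 1)) := by
    intro n hn
    have hnR : (2 : ℝ) ≤ (n : ℝ) := by exact_mod_cast hn
    have hne0 : (n : ℝ) ≠ 0 := by positivity
    have hne1 : (n : ℝ) - 1 ≠ 0 := by nlinarith
    have hnep1 : (n : ℝ) + 1 ≠ 0 := by positivity
    have hne3 : (n : ℝ)^3 - (n : ℝ) ≠ 0 := by
      have hfac : (n : ℝ)^3 - (n : ℝ) = (n : ℝ) * (((n : ℝ) - 1) * ((n : ℝ) + 1)) := by ring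
      rw [hfac]
      exact mul_ne_zero hne0 (mul_ne_zero hne1 hnep1)
    -- Kendall part
    have hgaussR : ∑ j ∈ range n, (j : ℝ) = (n : ℝ) * ((n : ℝ) - 1) / 2 := by
      have h2 := congrArg (fun k : ℕ => (k : ℝ)) (Finset.sum_range_id_mul_two n)
      push_cast [Nat.cast_sub (show 1 ≤ n by omega)] at h2
      linarith
    have hτint : Integrable (fun ω => τseq n ω) μ := by
      have hfe : (fun ω => τseq n ω) = fun ω => 2 / ((n : ℝ) * ((n : ℝ) - 1)) *
          ∑ j ∈ range n, ∑ i ∈ range j,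
            Real.sign (X i ω - X j ω) * Real.sign (Y i ω - Y j ω) := funext (hτseq n)
      rw [hfe]
      exact (integrable_finset_sum _ (fun j _ =>
        integrable_finset_sum _ (fun i _ => hsgn_int i j))).const_mul _
    have hτn : ∫ ω, τseq n ω ∂μ = τ := by
      simp only [hτseq]
      rw [integral_const_mul, integral_finset_sum _ (fun j _ =>
        integrable_finset_sum _ (fun i _ => hsgn_int i j))]
      rw [Finset.sum_congr rfl (fun j _ => by
        rw [integral_finset_sum _ (fun i _ => hsgn_int i j),
          Finset.sum_congr rfl (fun i hi => hsgnval i j (Nat.ne_of_lt (mem_range.mp hi))),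
          Finset.sum_const, card_range, nsmul_eq_mul])]
      rw [← Finset.sum_mul, hgaussR]
      field_simp
    -- Spearman part
    have hAX : ∀ i j : ℕ, MeasurableSet {ω' | X j ω' ≤ X i ω'} :=
      fun i j => measurableSet_le (hX j) (hX i)
    have hAY : ∀ i j : ℕ, MeasurableSet {ω' | Y j ω' ≤ Y i ω'} :=
      fun i j => measurableSet_le (hY j) (hY i)
    set cf : ℕ → ℕ → Ω → ℝ := fun i j ω =>
      ({ω' | X j ω' ≤ X i ω'}.indicator (fun _ => (1 : ℝ)) ω)
        - ({ω' | Y j ω' ≤ Y i ω'}.indicator (fun _ => (1 : ℝ)) ω) with hcfdef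
    have hcard : ∀ (i : ℕ) (ω : Ω), ((((range n).filter (fun j => X j ω ≤ X i ω)).card : ℝ)
        - (((range n).filter (fun j => Y j ω ≤ Y i ω)).card : ℝ)) = ∑ j ∈ range n, cf i j ω := by
      intro i ω
      rw [Finset.card_filter, Finset.card_filter]
      push_cast
      rw [← Finset.sum_sub_distrib]
      refine Finset.sum_congr rfl (fun j _ => ?_)
      by_cases h1 : X j ω ≤ X i ω <;> by_cases h2 : Y j ω ≤ Y i ω <;>
        simp [hcfdef, Set.indicator_apply, h1, h2]
    have hint2 : ∀ i j k : ℕ, Integrable (fun ω => cf i j ω * cf i k ω) μ :=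
      fun i j k => KRAux.integrable_ind_sub_mul μ (hAX i j) (hAY i j) (hAX i k) (hAY i k)
    have hsq_int : ∀ i : ℕ, Integrable (fun ω => (∑ j ∈ range n, cf i j ω)^2) μ := by
      intro i
      have hfuneq : (fun ω => (∑ j ∈ range n, cf i j ω)^2)
          = fun ω => ∑ j ∈ range n, ∑ k ∈ range n, cf i j ω * cf i k ω := by
        funext ω
        rw [sq, Finset.sum_mul_sum]
      rw [hfuneq]
      exact integrable_finset_sum _ (fun j _ =>
        integrable_finset_sum _ (fun k _ => hint2 i j k))
    have hSint : Integrable (fun ω => ∑ i ∈ range n, (∑ j ∈ range n, cf i j ω)^2) μ :=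
      integrable_finset_sum _ (fun i _ => hsq_int i)
    have hSval : ∫ ω, ∑ i ∈ range n, (∑ j ∈ range n, cf i j ω)^2 ∂μ
        = ∑ i ∈ range n, ∑ j ∈ range n, ∑ k ∈ range n, ∫ ω, cf i j ω * cf i k ω ∂μ := by
      rw [integral_finset_sum _ (fun i _ => hsq_int i)]
      refine Finset.sum_congr rfl (fun i _ => ?_)
      have hfuneq : (fun ω => (∑ j ∈ range n, cf i j ω)^2)
          = fun ω => ∑ j ∈ range n, ∑ k ∈ range n, cf i j ω * cf i k ω := by
        funext ω
        rw [sq, Finset.sum_mul_sum]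
      rw [hfuneq, integral_finset_sum _ (fun j _ =>
        integrable_finset_sum _ (fun k _ => hint2 i j k))]
      refine Finset.sum_congr rfl (fun j _ => ?_)
      rw [integral_finset_sum _ (fun k _ => hint2 i j k)]
    -- values of the elementary integrals
    have hvaljj : ∀ i j : ℕ, i ≠ j → ∫ ω, cf i j ω * cf i j ω ∂μ = 1 - 2 * pR := by
      intro i j hij
      have h : ∫ ω, cf i j ω * cf i j ω ∂μ
          = (μ ({ω' | X j ω' ≤ X i ω'} ∩ {ω' | X j ω' ≤ X i ω'})).toReal
            - (μ ({ω' | X j ω' ≤ X i ω'} ∩ {ω' | Y j ω' ≤ Y i ω'})).toReal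
            - (μ ({ω' | Y j ω' ≤ Y i ω'} ∩ {ω' | X j ω' ≤ X i ω'})).toReal
            + (μ ({ω' | Y j ω' ≤ Y i ω'} ∩ {ω' | Y j ω' ≤ Y i ω'})).toReal :=
        KRAux.integral_ind_sub_mul μ (hAX i j) (hAY i j) (hAX i j) (hAY i j)
      have e3 : μ ({ω' | X j ω' ≤ X i ω'} ∩ {ω' | Y j ω' ≤ Y i ω'}) = pE := by
        have hseteq : {ω' | X j ω' ≤ X i ω'} ∩ {ω' | Y j ω' ≤ Y i ω'}
            = {ω' | X j ω' ≤ X i ω' ∧ Y j ω' ≤ Y i ω'} := rfl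
        rw [hseteq]
        exact hPboth i j hij
      have e4 : μ ({ω' | Y j ω' ≤ Y i ω'} ∩ {ω' | X j ω' ≤ X i ω'}) = pE := by
        rw [Set.inter_comm]
        exact e3
      rw [h, Set.inter_self, Set.inter_self, hPx i j hij, hPy i j hij, e3, e4, hpval,
        htoReal_half]
      ring
    have hvaljk : ∀ i j k : ℕ, j ≠ i → k ≠ i → j ≠ k →
        ∫ ω, cf i j ω * cf i k ω ∂μ = 2/3 - 2 * qR := by
      intro i j k hji hki hjk
      have h : ∫ ω, cf i j ω * cf i k ω ∂μ
          = (μ ({ω' | X j ω' ≤ X i ω'} ∩ {ω' | X k ω' ≤ X i ω'})).toReal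
            - (μ ({ω' | X j ω' ≤ X i ω'} ∩ {ω' | Y k ω' ≤ Y i ω'})).toReal
            - (μ ({ω' | Y j ω' ≤ Y i ω'} ∩ {ω' | X k ω' ≤ X i ω'})).toReal
            + (μ ({ω' | Y j ω' ≤ Y i ω'} ∩ {ω' | Y k ω' ≤ Y i ω'})).toReal :=
        KRAux.integral_ind_sub_mul μ (hAX i j) (hAY i j) (hAX i k) (hAY i k)
      have e1 : μ ({ω' | X j ω' ≤ X i ω'} ∩ {ω' | X k ω' ≤ X i ω'}) = 1/3 := by
        have hseteq : {ω' | X j ω' ≤ X i ω'} ∩ {ω' | X k ω' ≤ X i ω'}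
            = {ω' | X j ω' ≤ X i ω' ∧ X k ω' ≤ X i ω'} := rfl
        rw [hseteq]
        exact hPxx i j k hji hki hjk
      have e2 : μ ({ω' | X j ω' ≤ X i ω'} ∩ {ω' | Y k ω' ≤ Y i ω'}) = qE := by
        have hseteq : {ω' | X j ω' ≤ X i ω'} ∩ {ω' | Y k ω' ≤ Y i ω'}
            = {ω' | X j ω' ≤ X i ω' ∧ Y k ω' ≤ Y i ω'} := rfl
        rw [hseteq]
        exact hPxy i j k hji hki hjk
      have e3 : μ ({ω' | Y j ω' ≤ Y i ω'} ∩ {ω' | X k ω' ≤ X i ω'}) = qE := by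
        have hseteq : {ω' | Y j ω' ≤ Y i ω'} ∩ {ω' | X k ω' ≤ X i ω'}
            = {ω' | Y j ω' ≤ Y i ω' ∧ X k ω' ≤ X i ω'} := rfl
        rw [hseteq]
        exact hPyx i j k hji hki hjk
      have e4 : μ ({ω' | Y j ω' ≤ Y i ω'} ∩ {ω' | Y k ω' ≤ Y i ω'}) = 1/3 := by
        have hseteq : {ω' | Y j ω' ≤ Y i ω'} ∩ {ω' | Y k ω' ≤ Y i ω'}
            = {ω' | Y j ω' ≤ Y i ω' ∧ Y k ω' ≤ Y i ω'} := rfl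
        rw [hseteq]
        exact hPyy i j k hji hki hjk
      rw [h, e1, e2, e3, e4, hqval, htoReal_third]
      ring
    have hcf0 : ∀ (i : ℕ) (ω : Ω), cf i i ω = 0 := by
      intro i ω
      have huX : {ω' | X i ω' ≤ X i ω'} = (Set.univ : Set Ω) := by ext ω'; simp
      have huY : {ω' | Y i ω' ≤ Y i ω'} = (Set.univ : Set Ω) := by ext ω'; simp
      rw [hcfdef]
      simp [huX, huY]
    have hval0 : ∀ i k : ℕ, ∫ ω, cf i i ω * cf i k ω ∂μ = 0 := by
      intro i k
      have hfe : (fun ω => cf i i ω * cf i k ω) = fun _ => (0 : ℝ) :=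
        funext fun ω => by rw [hcf0 i ω, zero_mul]
      rw [hfe, integral_zero]
    have hval0' : ∀ i j : ℕ, ∫ ω, cf i j ω * cf i i ω ∂μ = 0 := by
      intro i j
      have hfe : (fun ω => cf i j ω * cf i i ω) = fun _ => (0 : ℝ) :=
        funext fun ω => by rw [hcf0 i ω, mul_zero]
      rw [hfe, integral_zero]
    -- the triple sum
    have hinner : ∀ i ∈ range n, ∀ j ∈ range n, j ≠ i →
        ∑ k ∈ range n, ∫ ω, cf i j ω * cf i k ω ∂μ
          = (1 - 2 * pR) + ((n : ℝ) - 2) * (2/3 - 2 * qR) := by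
      intro i hi j hj hji
      have hjmem : j ∈ (range n).erase i := Finset.mem_erase.mpr ⟨hji, hj⟩
      rw [← Finset.sum_erase_add _ _ hi, hval0' i j, add_zero,
        ← Finset.sum_erase_add _ _ hjmem, hvaljj i j (Ne.symm hji)]
      have hrest : ∀ k ∈ ((range n).erase i).erase j,
          ∫ ω, cf i j ω * cf i k ω ∂μ = 2/3 - 2 * qR := by
        intro k hk
        obtain ⟨hkj, hk2⟩ := Finset.mem_erase.mp hk
        obtain ⟨hki, _⟩ := Finset.mem_erase.mp hk2
        exact hvaljk i j k hji hki (Ne.symm hkj)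
      rw [Finset.sum_congr rfl hrest, Finset.sum_const, nsmul_eq_mul]
      have hcard2 : (((range n).erase i).erase j).card = n - 2 := by
        rw [Finset.card_erase_of_mem hjmem, Finset.card_erase_of_mem hi, Finset.card_range]
        omega
      rw [hcard2, Nat.cast_sub hn]
      push_cast
      ring
    have hmid : ∀ i ∈ range n,
        ∑ j ∈ range n, ∑ k ∈ range n, ∫ ω, cf i j ω * cf i k ω ∂μ
          = ((n : ℝ) - 1) * ((1 - 2 * pR) + ((n : ℝ) - 2) * (2/3 - 2 * qR)) := by
      intro i hi
      rw [← Finset.sum_erase_add _ _ hi]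
      have hzero : ∑ k ∈ range n, ∫ ω, cf i i ω * cf i k ω ∂μ = 0 :=
        Finset.sum_eq_zero (fun k _ => hval0 i k)
      rw [hzero, add_zero,
        Finset.sum_congr rfl (fun j hj => hinner i hi j (Finset.mem_of_mem_erase hj)
          (Finset.mem_erase.mp hj).1),
        Finset.sum_const, nsmul_eq_mul, Finset.card_erase_of_mem hi, Finset.card_range,
        Nat.cast_sub (show 1 ≤ n by omega)]
      push_cast
      ring
    have htot : ∑ i ∈ range n, ∑ j ∈ range n, ∑ k ∈ range n, ∫ ω, cf i j ω * cf i k ω ∂μ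
        = (n : ℝ) * (((n : ℝ) - 1) * ((1 - 2 * pR) + ((n : ℝ) - 2) * (2/3 - 2 * qR))) := by
      rw [Finset.sum_congr rfl hmid, Finset.sum_const, card_range, nsmul_eq_mul]
    have hρfun : ∀ ω, ρseq n ω = 1 - (6 / ((n : ℝ)^3 - n)) *
        ∑ i ∈ range n, (∑ j ∈ range n, cf i j ω)^2 := by
      intro ω
      rw [hρseq]
      rw [Finset.sum_congr rfl (fun i _ =>
        congrArg (fun t : ℝ => t^2) (hcard i ω))]
      ring
    have hρint : Integrable (fun ω => ρseq n ω) μ := by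
      have hfe : (fun ω => ρseq n ω) = fun ω => 1 - (6 / ((n : ℝ)^3 - n)) *
          ∑ i ∈ range n, (∑ j ∈ range n, cf i j ω)^2 := funext hρfun
      rw [hfe]
      exact (integrable_const 1).sub (hSint.const_mul _)
    have hρn : ∫ ω, ρseq n ω ∂μ = 1 - (6 / ((n : ℝ)^3 - n)) *
        ((n : ℝ) * (((n : ℝ) - 1) * ((1 - 2 * pR) + ((n : ℝ) - 2) * (2/3 - 2 * qR)))) := by
      simp only [hρfun]
      rw [integral_sub (integrable_const 1) (hSint.const_mul _), integral_const,
        integral_const_mul, hSval, htot]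
      simp [measure_univ]
    -- combine
    have hsplit : ∫ ω, rseq n ω ∂μ
        = 1.5 * (∫ ω, τseq n ω ∂μ) - 0.5 * ∫ ω, ρseq n ω ∂μ := by
      simp only [hrseq]
      rw [integral_sub (hτint.const_mul _) (hρint.const_mul _),
        integral_const_mul, integral_const_mul]
    rw [hsplit, hτn, hρn, hτ, hρS]
    rw [show (n : ℝ)^3 - n = n * ((n - 1) * (n + 1)) by ring]
    field_simp
    ring
  refine ⟨hmain, ?_⟩
  have h1 : Tendsto (fun n : ℕ => (n : ℝ)) atTop atTop := tendsto_natCast_atTop_atTop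
  have hnum : Tendsto (fun n : ℕ => (3 * τ - ρS) + 2 * ρS / (n : ℝ)) atTop
      (nhds ((3 * τ - ρS) + 0)) :=
    tendsto_const_nhds.add (Tendsto.div_atTop tendsto_const_nhds h1)
  have hden : Tendsto (fun n : ℕ => 2 + 2 / (n : ℝ)) atTop (nhds (2 + 0)) :=
    tendsto_const_nhds.add (Tendsto.div_atTop tendsto_const_nhds h1)
  have h2 : Tendsto (fun n : ℕ => ((3 * τ - ρS) + 2 * ρS / (n : ℝ)) / (2 + 2 / (n : ℝ)))
      atTop (nhds ((3 * τ - ρS) / 2)) := by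
    have h3 := hnum.div hden (by norm_num)
    simpa [Pi.div_def] using h3
  refine Tendsto.congr' ?_ h2
  filter_upwards [eventually_ge_atTop 2] with n hn
  have hnR : (2 : ℝ) ≤ (n : ℝ) := by exact_mod_cast hn
  have hne0 : (n : ℝ) ≠ 0 := by positivity
  have hnep1 : (n : ℝ) + 1 ≠ 0 := by positivity
  rw [hmain n hn]
  field_simp
  ring
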